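/- Let S : ℝⁿ ⇉ ℝᵐ, X ⊆ ℝⁿ closed, (x̄, ū) ∈ graph S with x̄ ∈ X, and 0 < κ < κ̃. Suppose graph S is locally closed at (x̄, ū). If for all (x, u) ∈ graph(S|_X) close enough to (x̄, ū) and all (x*, -u*) in the limiting normal cone to graph(S|_X) at (x, u), one has sup{⟨x*, w⟩ | w ∈ cl pos(X − x), ‖w‖ = 1} ≤ κ‖u*‖, then S has the Lipschitz-like property relative to X at x̄ for ū with constant κ̃. -/

import Mathlib

open Filter Metric Set
open scoped Topology RealInnerProductSpace

noncomputable section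

abbrev Eu (n : ℕ) := EuclideanSpace ℝ (Fin n)

section GeneralDefs

variable {E F : Type*} [NormedAddCommGroup E] [NormedSpace ℝ E]
  [NormedAddCommGroup F] [NormedSpace ℝ F]

/-- `v` is a proximal normal vector to `A` at `a`: for some `t > 0`,
`a` is a nearest point of `A` to `a + t • v`. -/
def proxNormal (A : Set E) (a : E) : Set E :=
  {v | ∃ t : ℝ, 0 < t ∧ ‖t • v‖ = Metric.infDist (a + t • v) A}

/-- the set of nearest points of `K` to `x` (metric projection). -/
def projSet (K : Set E) (x : E) : Set E :=
  {y | y ∈ K ∧ ∀ z ∈ K, ‖x - y‖ ≤ ‖x - z‖}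

/-- the contingent (tangent) cone to `X` at `x`. -/
def tangCone (X : Set E) (x : E) : Set E :=
  {w | ∃ (t : ℕ → ℝ) (v : ℕ → E), (∀ k, 0 < t k) ∧ Tendsto t atTop (𝓝 0) ∧
    Tendsto v atTop (𝓝 w) ∧ ∀ k, x + t k • v k ∈ X}

/-- `A` is locally closed at `a`. -/
def LocallyClosedAt (A : Set E) (a : E) : Prop := ∃ U ∈ 𝓝 a, IsClosed (A ∩ U)

/-- the graph of the restriction `S|_X`. -/
def svGraph (S : E → Set F) (X : Set E) : Set (E × F) := {p | p.1 ∈ X ∧ p.2 ∈ S p.1}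

/-- the Lipschitz-like property of `S` relative to `X` at `x₀` for `u₀` with constant `κ`. -/
def LipschitzLikeRel (S : E → Set F) (X : Set E) (x₀ : E) (u₀ : F) (κ : ℝ) : Prop :=
  LocallyClosedAt (svGraph S univ) (x₀, u₀) ∧
  ∃ V ∈ 𝓝 x₀, ∃ W ∈ 𝓝 u₀, ∀ x ∈ X ∩ V, ∀ x' ∈ X ∩ V, ∀ u ∈ S x' ∩ W,
    ∃ u'' ∈ S x, ‖u - u''‖ ≤ κ * ‖x' - x‖

/-- the graphical modulus of `S` relative to `X` at `x₀` for `u₀` (as an extended real,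
the infimum of all Lipschitz-like constants). -/
def gmod (S : E → Set F) (X : Set E) (x₀ : E) (u₀ : F) : EReal :=
  sInf {c : EReal | ∃ κ : ℝ, 0 ≤ κ ∧ c = (κ : EReal) ∧
    ∃ V ∈ 𝓝 x₀, ∃ W ∈ 𝓝 u₀, ∀ x ∈ X ∩ V, ∀ x' ∈ X ∩ V, ∀ u ∈ S x' ∩ W,
      ∃ u'' ∈ S x, ‖u - u''‖ ≤ κ * ‖x' - x‖}

/-- the horizon cone of `A`. -/
def horizonCone (A : Set E) : Set E :=
  {w | ∃ (a : ℕ → E) (l : ℕ → ℝ), (∀ k, a k ∈ A) ∧ (∀ k, 0 < l k) ∧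
    Tendsto l atTop (𝓝 0) ∧ Tendsto (fun k => l k • a k) atTop (𝓝 w)}

/-- extended-real absolute difference `|a - b|`. -/
def eabsdiff (a b : EReal) : EReal := max (a - b) (b - a)

/-- `f` is locally Lipschitz continuous at `x₀` relative to `X`. -/
def RelLipschitzAt (f : E → EReal) (X : Set E) (x₀ : E) : Prop :=
  ∃ κ : ℝ, 0 ≤ κ ∧ ∃ V ∈ 𝓝 x₀, ∀ x ∈ X ∩ V, ∀ y ∈ X ∩ V,
    eabsdiff (f x) (f y) ≤ ((κ * ‖x - y‖ : ℝ) : EReal)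

/-- the Lipschitz modulus of `f` at `x₀` relative to `X` (as an extended real). -/
def relLipMod (f : E → EReal) (X : Set E) (x₀ : E) : EReal :=
  sInf {c : EReal | ∃ κ : ℝ, 0 ≤ κ ∧ c = (κ : EReal) ∧ ∃ V ∈ 𝓝 x₀,
    ∀ x ∈ X ∩ V, ∀ y ∈ X ∩ V, eabsdiff (f x) (f y) ≤ ((κ * ‖x - y‖ : ℝ) : EReal)}

end GeneralDefs

section InnerDefs

variable {E F : Type*} [NormedAddCommGroup E] [InnerProductSpace ℝ E]
  [NormedAddCommGroup F] [InnerProductSpace ℝ F]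

/-- the regular (Fréchet) normal cone to `A ⊆ E × F` at `a`. -/
def regNormalP (A : Set (E × F)) (a : E × F) : Set (E × F) :=
  {v | ∀ ε : ℝ, 0 < ε → ∃ δ > 0, ∀ b ∈ A, ‖b - a‖ ≤ δ →
    ⟪v.1, b.1 - a.1⟫ + ⟪v.2, b.2 - a.2⟫ ≤ ε * ‖b - a‖}

/-- the limiting (Mordukhovich) normal cone to `A ⊆ E × F` at `a`. -/
def limNormalP (A : Set (E × F)) (a : E × F) : Set (E × F) :=
  {v | ∃ (b : ℕ → E × F) (w : ℕ → E × F), (∀ k, b k ∈ A) ∧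
    (∀ k, w k ∈ regNormalP A (b k)) ∧ Tendsto b atTop (𝓝 a) ∧ Tendsto w atTop (𝓝 v)}

/-- the limiting coderivative of `S` at `x` for `u`:
`xs ∈ coderiv S x u us ↔ (xs, -us) ∈ N_{graph S}(x, u)`. -/
def coderiv (S : E → Set F) (x : E) (u : F) (us : F) : Set E :=
  {xs | (xs, -us) ∈ limNormalP (svGraph S univ) (x, u)}

/-- the projectional coderivative of `S` at `x₀` for `u₀` with respect to `X`. -/
def projCoderiv (S : E → Set F) (X : Set E) (x₀ : E) (u₀ : F) (us : F) : Set E :=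
  {xs | ∃ (x : ℕ → E) (u : ℕ → F) (xv : ℕ → E) (uv : ℕ → F) (y : ℕ → E),
    (∀ k, (x k, u k) ∈ svGraph S X) ∧
    (∀ k, (xv k, -(uv k)) ∈ limNormalP (svGraph S X) (x k, u k)) ∧
    (∀ k, y k ∈ projSet (tangCone X (x k)) (xv k)) ∧
    Tendsto x atTop (𝓝 x₀) ∧ Tendsto u atTop (𝓝 u₀) ∧
    Tendsto uv atTop (𝓝 us) ∧ Tendsto y atTop (𝓝 xs)}

/-- the regular (Fréchet) subdifferential of an extended-real-valued function. -/
def regSubdiff (g : E → EReal) (x : E) : Set E :=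
  {v | ∀ ε : ℝ, 0 < ε → ∃ δ > 0, ∀ y, ‖y - x‖ ≤ δ →
    g x + ((⟪v, y - x⟫ - ε * ‖y - x‖ : ℝ) : EReal) ≤ g y}

/-- the limiting (Mordukhovich) subdifferential. -/
def limSubdiff (g : E → EReal) (x : E) : Set E :=
  {v | ∃ (xk vk : ℕ → E), Tendsto xk atTop (𝓝 x) ∧
    Tendsto (fun k => g (xk k)) atTop (𝓝 (g x)) ∧
    (∀ k, vk k ∈ regSubdiff g (xk k)) ∧ Tendsto vk atTop (𝓝 v)}

/-- the horizon (singular) subdifferential. -/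
def horizonSubdiff (g : E → EReal) (x : E) : Set E :=
  {v | ∃ (xk vk : ℕ → E) (lk : ℕ → ℝ), Tendsto xk atTop (𝓝 x) ∧
    Tendsto (fun k => g (xk k)) atTop (𝓝 (g x)) ∧ (∀ k, 0 < lk k) ∧
    Tendsto lk atTop (𝓝 0) ∧ (∀ k, vk k ∈ regSubdiff g (xk k)) ∧
    Tendsto (fun k => lk k • vk k) atTop (𝓝 v)}

/-- the outer limiting subdifferential of `g` at `xb` with respect to `vb`. -/
def outerSubdiffWrt (g : E → EReal) (xb vb : E) : Set E :=
  {v | ∃ (xk vk : ℕ → E), Tendsto xk atTop (𝓝 xb) ∧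
    Tendsto (fun k => g (xk k)) atTop (𝓝 (g xb)) ∧
    (∀ k, g xb + ((⟪vb, xk k - xb⟫ : ℝ) : EReal) < g (xk k)) ∧
    (∀ k, vk k ∈ limSubdiff g (xk k)) ∧ Tendsto vk atTop (𝓝 v)}

/-- `D` is a convex polyhedron (finite intersection of closed half-spaces). -/
def IsPolyhedral (D : Set E) : Prop :=
  ∃ s : Finset (E × ℝ), D = {v | ∀ p ∈ s, ⟪p.1, v⟫ ≤ p.2}

/-- the support function of `D`. -/
def supportFn (D : Set E) : E → EReal :=
  fun x => sSup ((fun v => ((⟪v, x⟫ : ℝ) : EReal)) '' D)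

end InnerDefs


lemma aux_norm_mul {E : Type*} [NormedAddCommGroup E] [InnerProductSpace ℝ E]
    (p Δ : E) : ‖p + Δ‖ * ‖p‖ ≤ ‖p‖ ^ 2 + ⟪p, Δ⟫ + 2 * ‖Δ‖ ^ 2 := by
  have hid : ‖p + Δ‖ ^ 2 = ‖p‖ ^ 2 + 2 * ⟪p, Δ⟫ + ‖Δ‖ ^ 2 := norm_add_sq_real p Δ
  have hcs : ⟪p, Δ⟫ ≤ ‖p‖ * ‖Δ‖ := real_inner_le_norm p Δ
  have hcs' : -(‖p‖ * ‖Δ‖) ≤ ⟪p, Δ⟫ := by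
    have h := real_inner_le_norm p (-Δ)
    rw [inner_neg_right, norm_neg] at h; linarith
  have hR : 0 ≤ ‖p‖ ^ 2 + ⟪p, Δ⟫ + 2 * ‖Δ‖ ^ 2 := by
    nlinarith [sq_nonneg (‖p‖ - ‖Δ‖), sq_nonneg ‖Δ‖]
  have hsq : (‖p + Δ‖ * ‖p‖) ^ 2 ≤ (‖p‖ ^ 2 + ⟪p, Δ⟫ + 2 * ‖Δ‖ ^ 2) ^ 2 := by
    have h2 : (‖p + Δ‖ * ‖p‖) ^ 2 = (‖p‖ ^ 2 + 2 * ⟪p, Δ⟫ + ‖Δ‖ ^ 2) * ‖p‖ ^ 2 := by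
      rw [mul_pow, hid]
    rw [h2]
    nlinarith [sq_nonneg (⟪p, Δ⟫ + 2 * ‖Δ‖ ^ 2), sq_nonneg (‖p‖ * ‖Δ‖)]
  have h1 := Real.sqrt_le_sqrt hsq
  rwa [Real.sqrt_sq (by positivity), Real.sqrt_sq hR] at h1

lemma aux_sqrt_mul {F : Type*} [NormedAddCommGroup F] [InnerProductSpace ℝ F]
    (q Δ : F) (σ : ℝ) (hσ : 0 < σ) :
    Real.sqrt (‖q + Δ‖ ^ 2 + σ ^ 2) * Real.sqrt (‖q‖ ^ 2 + σ ^ 2) * σ ^ 2 ≤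
      (‖q‖ ^ 2 + σ ^ 2) * σ ^ 2 + σ ^ 2 * ⟪q, Δ⟫ + (‖q‖ ^ 2 + σ ^ 2) * ‖Δ‖ ^ 2 := by
  have hid : ‖q + Δ‖ ^ 2 = ‖q‖ ^ 2 + 2 * ⟪q, Δ⟫ + ‖Δ‖ ^ 2 := norm_add_sq_real q Δ
  have hcs : ⟪q, Δ⟫ ≤ ‖q‖ * ‖Δ‖ := real_inner_le_norm q Δ
  have hcs' : -(‖q‖ * ‖Δ‖) ≤ ⟪q, Δ⟫ := by
    have h := real_inner_le_norm q (-Δ)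
    rw [inner_neg_right, norm_neg] at h; linarith
  have hq2 : Real.sqrt (‖q + Δ‖ ^ 2 + σ ^ 2) ^ 2 = ‖q + Δ‖ ^ 2 + σ ^ 2 :=
    Real.sq_sqrt (by positivity)
  have hp2 : Real.sqrt (‖q‖ ^ 2 + σ ^ 2) ^ 2 = ‖q‖ ^ 2 + σ ^ 2 :=
    Real.sq_sqrt (by positivity)
  have hqn : 0 ≤ Real.sqrt (‖q + Δ‖ ^ 2 + σ ^ 2) := Real.sqrt_nonneg _
  have hpn : 0 ≤ Real.sqrt (‖q‖ ^ 2 + σ ^ 2) := Real.sqrt_nonneg _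
  have hR : 0 ≤ (‖q‖ ^ 2 + σ ^ 2) * σ ^ 2 + σ ^ 2 * ⟪q, Δ⟫ + (‖q‖ ^ 2 + σ ^ 2) * ‖Δ‖ ^ 2 := by
    nlinarith [sq_nonneg (‖q‖ - ‖Δ‖), sq_nonneg σ, sq_nonneg ‖q‖, sq_nonneg ‖Δ‖,
      mul_pos hσ hσ]
  have hsq : (Real.sqrt (‖q + Δ‖ ^ 2 + σ ^ 2) * Real.sqrt (‖q‖ ^ 2 + σ ^ 2) * σ ^ 2) ^ 2 ≤
      ((‖q‖ ^ 2 + σ ^ 2) * σ ^ 2 + σ ^ 2 * ⟪q, Δ⟫ + (‖q‖ ^ 2 + σ ^ 2) * ‖Δ‖ ^ 2) ^ 2 := by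
    have h2 : (Real.sqrt (‖q + Δ‖ ^ 2 + σ ^ 2) * Real.sqrt (‖q‖ ^ 2 + σ ^ 2) * σ ^ 2) ^ 2
        = (‖q + Δ‖ ^ 2 + σ ^ 2) * (‖q‖ ^ 2 + σ ^ 2) * σ ^ 4 := by
      rw [mul_pow, mul_pow, hq2, hp2]; ring
    rw [h2, hid]
    nlinarith [sq_nonneg (σ ^ 2 * ⟪q, Δ⟫ + (‖q‖ ^ 2 + σ ^ 2) * ‖Δ‖ ^ 2),
      mul_nonneg (mul_nonneg (mul_nonneg (add_nonneg (sq_nonneg ‖q‖) (sq_nonneg σ))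
        (sq_nonneg σ)) (sq_nonneg ‖Δ‖)) (by positivity : (0:ℝ) ≤ 2 * ‖q‖ ^ 2 + σ ^ 2)]
  have h1 := Real.sqrt_le_sqrt hsq
  rwa [Real.sqrt_sq (by positivity), Real.sqrt_sq hR] at h1

set_option maxHeartbeats 2000000

/-- Theorem 2.2, Sufficiency: if for all `(x, u) ∈ graph S|_X` close enough
to `(x̄, ū)` and all `(x*, -u*)` in the limiting normal cone to `graph S|_X` at `(x, u)`,
one has `⟨x*, w⟩ ≤ κ‖u*‖` for all unit vectors `w ∈ cl pos(X - x)`, then `S` has the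
Lipschitz-like property relative to `X` at `x̄` for `ū` with constant `κ̃ > κ`. -/
theorem lipschitzLikeRel_sufficiency {n m : ℕ} (S : Eu n → Set (Eu m)) (X : Set (Eu n))
    (xb : Eu n) (ub : Eu m) (hX : IsClosed X) (hxb : xb ∈ X) (hub : ub ∈ S xb)
    (κ κ' : ℝ) (hκ : 0 < κ) (hκκ' : κ < κ')
    (hloc : LocallyClosedAt (svGraph S univ) (xb, ub))
    (hcond : ∀ᶠ p : Eu n × Eu m in 𝓝 (xb, ub), p ∈ svGraph S X →
      ∀ xs us, (xs, -us) ∈ limNormalP (svGraph S X) p →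
        ∀ w ∈ closure {w : Eu n | ∃ l : ℝ, 0 ≤ l ∧ ∃ y ∈ X, w = l • (y - p.1)},
          ‖w‖ = 1 → ⟪xs, w⟫ ≤ κ * ‖us‖) :
    LipschitzLikeRel S X xb ub κ' := by
  classical
  -- basic constants
  set κ₁ : ℝ := (κ + κ') / 2 with hκ₁def
  have hκ₁pos : 0 < κ₁ := by rw [hκ₁def]; linarith
  have hκκ₁ : κ < κ₁ := by rw [hκ₁def]; linarith
  have hκ₁κ' : κ₁ < κ' := by rw [hκ₁def]; linarith
  set δ₂ : ℝ := (κ' ^ 2 - κ₁ ^ 2) / (2 * κ₁) with hδ₂def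
  have hδ₂pos : 0 < δ₂ := div_pos (by nlinarith [hκ₁pos, hκ₁κ']) (by linarith)
  obtain ⟨U, hUnhds, hUclosed⟩ := hloc
  obtain ⟨r₁, hr₁pos, hball₁⟩ := Metric.mem_nhds_iff.mp hUnhds
  obtain ⟨r₂, hr₂pos, hcond'⟩ := Metric.eventually_nhds_iff.mp hcond
  set r : ℝ := min (r₁ / 2) (r₂ / 2) with hrdef
  have hrpos : 0 < r := lt_min (by linarith) (by linarith)
  have hrr₁ : r < r₁ := lt_of_le_of_lt (min_le_left _ _) (by linarith)
  have hrr₂ : r / 2 < r₂ := by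
    have h := min_le_right (r₁ / 2) (r₂ / 2)
    rw [← hrdef] at h; linarith
  set M : ℝ := 3 + 2 * δ₂ + 2 * κ₁ with hMdef
  have hM3 : 3 ≤ M := by rw [hMdef]; linarith
  have hMpos : 0 < M := by linarith
  set δ : ℝ := r / (2 * M) with hδdef
  have hδpos : 0 < δ := by
    rw [hδdef]; exact div_pos hrpos (by linarith)
  have hδr : δ ≤ r := by
    rw [hδdef, div_le_iff₀ (by linarith : (0:ℝ) < 2 * M)]
    have h := mul_le_mul_of_nonneg_left (show (1:ℝ) ≤ 2 * M by linarith) hrpos.le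
    linarith [h]
  have hMδ : M * δ = r / 2 := by
    rw [hδdef]; field_simp
  have h3δ : 3 * δ ≤ r / 2 := by
    have h := mul_le_mul_of_nonneg_right hM3 hδpos.le
    exact le_trans h hMδ.le
  -- the localized graph is compact
  set A : Set (Eu n × Eu m) := svGraph S X ∩ Metric.closedBall (xb, ub) r with hAdef
  have hAeq : A = (svGraph S univ ∩ U) ∩
      ((X ×ˢ (Set.univ : Set (Eu m))) ∩ Metric.closedBall (xb, ub) r) := by
    rw [hAdef]
    ext p
    constructor
    · rintro ⟨⟨h1, h2⟩, h3⟩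
      refine ⟨⟨⟨Set.mem_univ _, h2⟩, hball₁ ?_⟩, ⟨⟨h1, Set.mem_univ _⟩, h3⟩⟩
      exact Metric.mem_ball.mpr (lt_of_le_of_lt (Metric.mem_closedBall.mp h3) hrr₁)
    · rintro ⟨⟨⟨_, h2⟩, _⟩, ⟨⟨h1, _⟩, h3⟩⟩
      exact ⟨⟨h1, h2⟩, h3⟩
  have hAclosed : IsClosed A := by
    rw [hAeq]
    exact hUclosed.inter ((hX.prod isClosed_univ).inter Metric.isClosed_closedBall)
  have hAcompact : IsCompact A :=
    (isCompact_closedBall ((xb, ub) : Eu n × Eu m) r).of_isClosed_subset hAclosed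
      Set.inter_subset_right
  refine ⟨⟨U, hUnhds, hUclosed⟩, Metric.ball xb δ, Metric.ball_mem_nhds _ hδpos,
    Metric.ball ub δ, Metric.ball_mem_nhds _ hδpos, ?_⟩
  rintro x ⟨hxX, hxb'⟩ x' ⟨hx'X, hx'b⟩ u ⟨huS, hub'⟩
  by_cases hE : x' = x
  · exact ⟨u, by rw [← hE]; exact huS, by simp [hE]⟩
  set ε : ℝ := ‖x' - x‖ with hεdef
  have hεpos : 0 < ε := by
    rw [hεdef]; exact norm_pos_iff.mpr (sub_ne_zero.mpr hE)
  have hε2δ : ε < 2 * δ := by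
    have h1 : dist x' xb < δ := Metric.mem_ball.mp hx'b
    have h2 : dist x xb < δ := Metric.mem_ball.mp hxb'
    have h3 : dist x' x ≤ dist x' xb + dist x xb := dist_triangle_right x' x xb
    rw [hεdef, ← dist_eq_norm]
    linarith
  set σ : ℝ := δ₂ * ε with hσdef
  have hσpos : 0 < σ := mul_pos hδ₂pos hεpos
  set Φ : Eu n × Eu m → ℝ :=
    fun p => Real.sqrt (‖p.2 - u‖ ^ 2 + σ ^ 2) + κ₁ * ‖p.1 - x‖ with hΦdef
  have hΦcont : ContinuousOn Φ A := by
    apply Continuous.continuousOn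
    rw [hΦdef]
    exact ((((continuous_snd.sub continuous_const).norm.pow 2).add
      continuous_const).sqrt).add
      (continuous_const.mul (continuous_fst.sub continuous_const).norm)
  have hx'uA : (x', u) ∈ A := by
    refine ⟨⟨hx'X, huS⟩, Metric.mem_closedBall.mpr ?_⟩
    rw [Prod.dist_eq]
    exact max_le (le_of_lt (lt_of_lt_of_le (Metric.mem_ball.mp hx'b) hδr))
      (le_of_lt (lt_of_lt_of_le (Metric.mem_ball.mp hub') hδr))
  obtain ⟨⟨z1, v1⟩, hzvA, hmin⟩ := hAcompact.exists_isMinOn ⟨_, hx'uA⟩ hΦcont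
  have hminle : ∀ b ∈ A, Φ (z1, v1) ≤ Φ b := fun b hb => isMinOn_iff.mp hmin b hb
  have hΦx'u : Φ (x', u) = σ + κ₁ * ε := by
    rw [hΦdef]
    show Real.sqrt (‖u - u‖ ^ 2 + σ ^ 2) + κ₁ * ‖x' - x‖ = σ + κ₁ * ε
    rw [sub_self, norm_zero, show (0:ℝ) ^ 2 + σ ^ 2 = σ ^ 2 by ring,
      Real.sqrt_sq hσpos.le, ← hεdef]
  have hΦzv : Φ (z1, v1) = Real.sqrt (‖v1 - u‖ ^ 2 + σ ^ 2) + κ₁ * ‖z1 - x‖ := by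
    rw [hΦdef]
  have hval : Real.sqrt (‖v1 - u‖ ^ 2 + σ ^ 2) + κ₁ * ‖z1 - x‖ ≤ σ + κ₁ * ε := by
    have h := hminle (x', u) hx'uA
    rw [hΦx'u, hΦzv] at h
    exact h
  set Hp : ℝ := Real.sqrt (‖v1 - u‖ ^ 2 + σ ^ 2) with hHpdef
  have hHppos : 0 < Hp := by
    rw [hHpdef]
    exact Real.sqrt_pos.mpr (by linarith [sq_nonneg ‖v1 - u‖, pow_pos hσpos 2])
  have hHpsq : Hp ^ 2 = ‖v1 - u‖ ^ 2 + σ ^ 2 := by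
    rw [hHpdef]; exact Real.sq_sqrt (by positivity)
  have hvHp : ‖v1 - u‖ ≤ Hp := by
    rw [hHpdef]
    have h := Real.sqrt_le_sqrt
      (show ‖v1 - u‖ ^ 2 ≤ ‖v1 - u‖ ^ 2 + σ ^ 2 by linarith [sq_nonneg σ])
    rwa [Real.sqrt_sq (norm_nonneg _)] at h
  have hσHp : σ ≤ Hp := by
    rw [hHpdef]
    have h := Real.sqrt_le_sqrt
      (show σ ^ 2 ≤ ‖v1 - u‖ ^ 2 + σ ^ 2 by linarith [sq_nonneg ‖v1 - u‖])
    rwa [Real.sqrt_sq hσpos.le] at h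
  have hz_le : ‖z1 - x‖ ≤ ε := by
    have h' : κ₁ * ‖z1 - x‖ ≤ κ₁ * ε := by linarith [hval, hσHp]
    exact (mul_le_mul_iff_right₀ hκ₁pos).mp h'
  have hHple : Hp ≤ σ + κ₁ * ε := by
    linarith [hval, mul_nonneg hκ₁pos.le (norm_nonneg (z1 - x))]
  have hv_le : ‖v1 - u‖ ≤ σ + κ₁ * ε := le_trans hvHp hHple
  have hdisthalf : dist ((z1, v1) : Eu n × Eu m) (xb, ub) ≤ r / 2 := by
    rw [Prod.dist_eq]
    have hxxb : dist x xb < δ := Metric.mem_ball.mp hxb'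
    have hubd : dist u ub < δ := Metric.mem_ball.mp hub'
    have h1 : dist z1 xb ≤ r / 2 := by
      have ht : dist z1 xb ≤ dist z1 x + dist x xb := dist_triangle z1 x xb
      rw [dist_eq_norm z1 x] at ht
      have : dist z1 xb ≤ ε + δ := by linarith
      linarith [hε2δ, h3δ]
    have h2 : dist v1 ub ≤ r / 2 := by
      have ht : dist v1 ub ≤ dist v1 u + dist u ub := dist_triangle v1 u ub
      rw [dist_eq_norm v1 u] at ht
      have hσε : σ + κ₁ * ε ≤ (δ₂ + κ₁) * (2 * δ) := by
        rw [hσdef]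
        have ha := mul_le_mul_of_nonneg_left hε2δ.le hδ₂pos.le
        have hb := mul_le_mul_of_nonneg_left hε2δ.le hκ₁pos.le
        linarith [ha, hb]
      have hMδ' : (δ₂ + κ₁) * (2 * δ) + δ ≤ r / 2 := by
        have hMeq : ((δ₂ + κ₁) * 2 + 1) * δ = (M - 2) * δ := by rw [hMdef]; ring
        linarith [hMeq, hMδ, hδpos]
      linarith [hv_le]
    exact max_le h1 h2
  by_cases hzx : z1 = x
  · refine ⟨v1, ?_, ?_⟩
    · have hv := hzvA.1.2
      rwa [hzx] at hv
    · have hsq2 : ‖v1 - u‖ ^ 2 ≤ κ₁ ^ 2 * ε ^ 2 + 2 * σ * κ₁ * ε := by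
        have h2 := mul_self_le_mul_self hHppos.le hHple
        linarith [h2, hHpsq]
      have hκ₁ne : κ₁ ≠ 0 := ne_of_gt hκ₁pos
      have h2σ : 2 * σ * κ₁ * ε = (κ' ^ 2 - κ₁ ^ 2) * ε ^ 2 := by
        rw [hσdef, hδ₂def]
        field_simp
      have hkey : ‖v1 - u‖ ^ 2 ≤ (κ' * ε) ^ 2 := by linarith [hsq2, h2σ]
      have hfin : ‖v1 - u‖ ≤ κ' * ε := by
        have h1 := Real.sqrt_le_sqrt hkey
        rwa [Real.sqrt_sq (norm_nonneg _),
          Real.sqrt_sq (mul_pos (lt_trans hκ hκκ') hεpos).le] at h1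
      rw [norm_sub_rev] at hfin
      exact hfin
  · exfalso
    have hd₀pos : 0 < ‖x - z1‖ := norm_pos_iff.mpr (sub_ne_zero.mpr (Ne.symm hzx))
    set d₀ : ℝ := ‖x - z1‖ with hd₀def
    have hd₀ne : d₀ ≠ 0 := ne_of_gt hd₀pos
    have hd₀rev : ‖z1 - x‖ = d₀ := by rw [hd₀def, norm_sub_rev]
    set xs : Eu n := (κ₁ / d₀) • (x - z1) with hxsdef
    set us : Eu m := Hp⁻¹ • (v1 - u) with husdef
    have hreg : ((xs, -us) : Eu n × Eu m) ∈ regNormalP (svGraph S X) (z1, v1) := by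
      intro ε' hε'
      set C₃ : ℝ := 2 * κ₁ / d₀ + Hp / σ ^ 2 with hC₃def
      have hC₃pos : 0 < C₃ := by
        rw [hC₃def]
        exact add_pos (div_pos (by linarith) hd₀pos) (div_pos hHppos (pow_pos hσpos 2))
      refine ⟨min (r / 2) (ε' / C₃), lt_min (by linarith) (div_pos hε' hC₃pos), ?_⟩
      intro b hbA hbd
      show ⟪xs, b.1 - z1⟫ + ⟪-us, b.2 - v1⟫ ≤ ε' * ‖b - ((z1, v1) : Eu n × Eu m)‖
      have hbAr : b ∈ A := by
        refine ⟨hbA, Metric.mem_closedBall.mpr ?_⟩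
        calc dist b (xb, ub) ≤ dist b (z1, v1) + dist ((z1, v1) : Eu n × Eu m) (xb, ub) :=
              dist_triangle _ _ _
        _ ≤ r / 2 + r / 2 := add_le_add
              (by rw [dist_eq_norm]; exact le_trans hbd (min_le_left _ _)) hdisthalf
        _ = r := by ring
      have hΦle : Φ (z1, v1) ≤ Φ b := hminle b hbAr
      set nb : ℝ := ‖b - ((z1, v1) : Eu n × Eu m)‖ with hnbdef
      have hnb0 : 0 ≤ nb := by rw [hnbdef]; exact norm_nonneg _
      have hb1 : ‖b.1 - z1‖ ≤ nb := by
        rw [hnbdef]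
        have h := norm_fst_le (b - ((z1, v1) : Eu n × Eu m))
        simpa using h
      have hb2 : ‖b.2 - v1‖ ≤ nb := by
        rw [hnbdef]
        have h := norm_snd_le (b - ((z1, v1) : Eu n × Eu m))
        simpa using h
      have hx1 : ⟪xs, b.1 - z1⟫ ≤ κ₁ * d₀ + 2 * κ₁ * ‖b.1 - z1‖ ^ 2 / d₀ - κ₁ * ‖b.1 - x‖ := by
        have haux := aux_norm_mul (z1 - x) (b.1 - z1)
        rw [show z1 - x + (b.1 - z1) = b.1 - x by abel, hd₀rev] at haux
        have hinner : ⟪xs, b.1 - z1⟫ = (κ₁ / d₀) * (-⟪z1 - x, b.1 - z1⟫) := by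
          rw [hxsdef, real_inner_smul_left, show x - z1 = -(z1 - x) by abel,
            inner_neg_left]
        rw [hinner]
        have hstep : -⟪z1 - x, b.1 - z1⟫ ≤ d₀ ^ 2 + 2 * ‖b.1 - z1‖ ^ 2 - ‖b.1 - x‖ * d₀ := by
          linarith [haux]
        calc (κ₁ / d₀) * (-⟪z1 - x, b.1 - z1⟫)
            ≤ (κ₁ / d₀) * (d₀ ^ 2 + 2 * ‖b.1 - z1‖ ^ 2 - ‖b.1 - x‖ * d₀) :=
              mul_le_mul_of_nonneg_left hstep (le_of_lt (div_pos hκ₁pos hd₀pos))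
        _ = κ₁ * d₀ + 2 * κ₁ * ‖b.1 - z1‖ ^ 2 / d₀ - κ₁ * ‖b.1 - x‖ := by
              field_simp
      have hx2 : ⟪-us, b.2 - v1⟫ ≤
          Hp + Hp * ‖b.2 - v1‖ ^ 2 / σ ^ 2 - Real.sqrt (‖b.2 - u‖ ^ 2 + σ ^ 2) := by
        have haux := aux_sqrt_mul (v1 - u) (b.2 - v1) σ hσpos
        rw [show v1 - u + (b.2 - v1) = b.2 - u by abel] at haux
        rw [← hHpdef] at haux
        rw [show ‖v1 - u‖ ^ 2 + σ ^ 2 = Hp ^ 2 from hHpsq.symm] at haux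
        have hinner2 : ⟪-us, b.2 - v1⟫ = Hp⁻¹ * (-⟪v1 - u, b.2 - v1⟫) := by
          rw [husdef, inner_neg_left, real_inner_smul_left]
          ring
        have hstep : -⟪v1 - u, b.2 - v1⟫ ≤
            Hp * (Hp + Hp * ‖b.2 - v1‖ ^ 2 / σ ^ 2 - Real.sqrt (‖b.2 - u‖ ^ 2 + σ ^ 2)) := by
          have hexp : Hp * (Hp + Hp * ‖b.2 - v1‖ ^ 2 / σ ^ 2 -
              Real.sqrt (‖b.2 - u‖ ^ 2 + σ ^ 2)) =
              (Hp ^ 2 * σ ^ 2 + Hp ^ 2 * ‖b.2 - v1‖ ^ 2 -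
                Real.sqrt (‖b.2 - u‖ ^ 2 + σ ^ 2) * Hp * σ ^ 2) / σ ^ 2 := by
            field_simp
          rw [hexp, le_div_iff₀ (pow_pos hσpos 2)]
          linarith [haux]
        calc ⟪-us, b.2 - v1⟫ = Hp⁻¹ * (-⟪v1 - u, b.2 - v1⟫) := hinner2
        _ ≤ Hp⁻¹ * (Hp * (Hp + Hp * ‖b.2 - v1‖ ^ 2 / σ ^ 2 -
              Real.sqrt (‖b.2 - u‖ ^ 2 + σ ^ 2))) :=
              mul_le_mul_of_nonneg_left hstep (inv_nonneg.mpr hHppos.le)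
        _ = Hp + Hp * ‖b.2 - v1‖ ^ 2 / σ ^ 2 - Real.sqrt (‖b.2 - u‖ ^ 2 + σ ^ 2) := by
              field_simp
      have hΦb : Φ b = Real.sqrt (‖b.2 - u‖ ^ 2 + σ ^ 2) + κ₁ * ‖b.1 - x‖ := by
        rw [hΦdef]
      have hΦle' : Hp + κ₁ * d₀ ≤
          Real.sqrt (‖b.2 - u‖ ^ 2 + σ ^ 2) + κ₁ * ‖b.1 - x‖ := by
        have h := hΦle
        rw [hΦzv, hΦb] at h
        rw [hd₀rev] at h
        exact h
      have hsq1 : ‖b.1 - z1‖ ^ 2 ≤ nb ^ 2 := pow_le_pow_left₀ (norm_nonneg _) hb1 2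
      have hsq2 : ‖b.2 - v1‖ ^ 2 ≤ nb ^ 2 := pow_le_pow_left₀ (norm_nonneg _) hb2 2
      have hfrac1 : 2 * κ₁ * ‖b.1 - z1‖ ^ 2 / d₀ ≤ 2 * κ₁ * nb ^ 2 / d₀ := by
        have h := mul_le_mul_of_nonneg_left hsq1 (show (0:ℝ) ≤ 2 * κ₁ by linarith)
        exact (div_le_div_iff_of_pos_right hd₀pos).mpr h
      have hfrac2 : Hp * ‖b.2 - v1‖ ^ 2 / σ ^ 2 ≤ Hp * nb ^ 2 / σ ^ 2 := by
        have h := mul_le_mul_of_nonneg_left hsq2 hHppos.le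
        exact (div_le_div_iff_of_pos_right (pow_pos hσpos 2)).mpr h
      have hCnb : 2 * κ₁ * nb ^ 2 / d₀ + Hp * nb ^ 2 / σ ^ 2 = C₃ * nb ^ 2 := by
        rw [hC₃def]
        field_simp
      have hnble : nb ≤ ε' / C₃ := le_trans hbd (min_le_right _ _)
      have hfin2 : C₃ * nb ^ 2 ≤ ε' * nb := by
        have h2 : C₃ * nb ≤ ε' := by
          have hh := (le_div_iff₀ hC₃pos).mp hnble
          linarith [hh]
        calc C₃ * nb ^ 2 = C₃ * nb * nb := by ring
        _ ≤ ε' * nb := mul_le_mul_of_nonneg_right h2 hnb0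
      have hsum1 : ⟪xs, b.1 - z1⟫ + ⟪-us, b.2 - v1⟫ ≤
          2 * κ₁ * ‖b.1 - z1‖ ^ 2 / d₀ + Hp * ‖b.2 - v1‖ ^ 2 / σ ^ 2 := by
        linarith [hx1, hx2, hΦle']
      have hsum2 : (2 * κ₁ * ‖b.1 - z1‖ ^ 2 / d₀ + Hp * ‖b.2 - v1‖ ^ 2 / σ ^ 2 : ℝ) ≤
          C₃ * nb ^ 2 := by
        linarith [hfrac1, hfrac2, hCnb]
      exact le_trans hsum1 (le_trans hsum2 hfin2)
    have hlim : ((xs, -us) : Eu n × Eu m) ∈ limNormalP (svGraph S X) (z1, v1) :=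
      ⟨fun _ => (z1, v1), fun _ => (xs, -us), fun _ => hzvA.1, fun _ => hreg,
        tendsto_const_nhds, tendsto_const_nhds⟩
    have hnear : dist ((z1, v1) : Eu n × Eu m) (xb, ub) < r₂ := lt_of_le_of_lt hdisthalf hrr₂
    set w : Eu n := d₀⁻¹ • (x - z1) with hwdef
    have hwmem : w ∈ closure {w : Eu n | ∃ l : ℝ, 0 ≤ l ∧ ∃ y ∈ X,
        w = l • (y - ((z1, v1) : Eu n × Eu m).1)} :=
      subset_closure ⟨d₀⁻¹, inv_nonneg.mpr (norm_nonneg _), x, hxX, by rw [hwdef]⟩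
    have hwnorm : ‖w‖ = 1 := by
      rw [hwdef, norm_smul, norm_inv, Real.norm_eq_abs, abs_of_pos hd₀pos, ← hd₀def]
      exact inv_mul_cancel₀ hd₀ne
    have hfinal := hcond' hnear hzvA.1 xs us hlim w hwmem hwnorm
    have hxsw : ⟪xs, w⟫ = κ₁ := by
      rw [hxsdef, hwdef, real_inner_smul_left, real_inner_smul_right,
        real_inner_self_eq_norm_sq, ← hd₀def]
      field_simp
    have husn : ‖us‖ ≤ 1 := by
      rw [husdef, norm_smul, norm_inv, Real.norm_eq_abs, abs_of_pos hHppos]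
      have h := hvHp
      rw [inv_mul_le_iff₀ hHppos]
      linarith
    rw [hxsw] at hfinal
    have hh := mul_le_mul_of_nonneg_left husn hκ.le
    linarith [hfinal, hh, hκκ₁]
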